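/- Let G be a (P2+P3, complement-of-(P2+P3))-free graph containing an induced 4-cycle C = v1v2v3v4. Suppose there are adjacent vertices p ∈ A_1 and q ∈ A_3 (where A_i = {v : N(v)∩C = {v_i}}). Then every vertex of D ∪ X_2 is adjacent to at least one of p, q, where D is the set of vertices complete to C and X_2 = {v : N(v)∩C = {v_2, v_4}}. -/

import Mathlib

open SimpleGraph

/-- `P2 + P3`: disjoint union of a 2-vertex path and a 3-vertex path. -/
def p2p3 : SimpleGraph (Fin 5) :=
  SimpleGraph.fromRel fun a b =>
    (a = 0 ∧ b = 1) ∨ (a = 2 ∧ b = 3) ∨ (a = 3 ∧ b = 4)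

/-- `G` contains no induced copy of `H`. -/
def InducedFree {α β : Type*} (H : SimpleGraph α) (G : SimpleGraph β) : Prop :=
  ¬ ∃ f : α ↪ β, ∀ a b, H.Adj a b ↔ G.Adj (f a) (f b)

/-- `s` is a stable (independent) set in `G`. -/
def StableSet {V : Type*} (G : SimpleGraph V) (s : Set V) : Prop :=
  s.Pairwise fun a b => ¬ G.Adj a b

/-- `v 0, v 1, v 2, v 3` are the vertices, in cyclic order, of an induced 4-cycle in `G`. -/
def InducedC4 {V : Type*} (G : SimpleGraph V) (v : Fin 4 → V) : Prop :=
  Function.Injective v ∧ (∀ i : Fin 4, G.Adj (v i) (v (i + 1))) ∧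
    ¬ G.Adj (v 0) (v 2) ∧ ¬ G.Adj (v 1) (v 3)

/-- `A_i`: vertices outside the cycle whose unique neighbour on the cycle is `v i`. -/
def vertA {V : Type*} (G : SimpleGraph V) (v : Fin 4 → V) (i : Fin 4) : Set V :=
  {x | x ∉ Set.range v ∧ ∀ j, G.Adj x (v j) ↔ j = i}

/-- `B_i`: vertices outside the cycle whose neighbours on the cycle are exactly `v i, v (i+1)`. -/
def vertB {V : Type*} (G : SimpleGraph V) (v : Fin 4 → V) (i : Fin 4) : Set V :=
  {x | x ∉ Set.range v ∧ ∀ j, G.Adj x (v j) ↔ (j = i ∨ j = i + 1)}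

/-- `X_j`: vertices outside the cycle whose neighbours on the cycle are exactly `v j, v (j+2)`. -/
def vertX {V : Type*} (G : SimpleGraph V) (v : Fin 4 → V) (j : Fin 4) : Set V :=
  {x | x ∉ Set.range v ∧ ∀ k, G.Adj x (v k) ↔ (k = j ∨ k = j + 2)}

/-- `T`: vertices outside the cycle with no neighbour on the cycle. -/
def vertT {V : Type*} (G : SimpleGraph V) (v : Fin 4 → V) : Set V :=
  {x | x ∉ Set.range v ∧ ∀ j, ¬ G.Adj x (v j)}

/-- `D`: vertices complete to the cycle. -/
def vertD {V : Type*} (G : SimpleGraph V) (v : Fin 4 → V) : Set V :=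
  {x | ∀ j, G.Adj x (v j)}

set_option maxHeartbeats 2000000 in
theorem stmt19 {V : Type*} (G : SimpleGraph V)
    (h1 : InducedFree p2p3 G) (h2 : InducedFree p2p3ᶜ G)
    (v : Fin 4 → V) (hC : InducedC4 G v)
    (p q : V) (hp : p ∈ vertA G v 0) (hq : q ∈ vertA G v 2) (hpq : G.Adj p q) :
    ∀ x ∈ vertD G v ∪ vertX G v 1, G.Adj x p ∨ G.Adj x q := by
  intro x hx
  by_contra hcon
  push_neg at hcon
  obtain ⟨hxp, hxq⟩ := hcon
  obtain ⟨hinj, hadj, h02, h13⟩ := hC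
  obtain ⟨hpR, hpA⟩ := hp
  obtain ⟨hqR, hqA⟩ := hq
  -- x is adjacent to v 1 and v 3
  have hx1 : G.Adj x (v 1) := by
    cases hx with
    | inl h => exact h 1
    | inr h => exact (h.2 1).mpr (Or.inl rfl)
  have hx3 : G.Adj x (v 3) := by
    cases hx with
    | inl h => exact h 3
    | inr h => exact (h.2 3).mpr (Or.inr rfl)
  -- basic non-adjacencies
  have hp1 : ¬ G.Adj p (v 1) := fun h => by simpa using (hpA 1).mp h
  have hp3 : ¬ G.Adj p (v 3) := fun h => by simpa using (hpA 3).mp h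
  have hq1 : ¬ G.Adj q (v 1) := fun h => by simpa using (hqA 1).mp h
  have hq3 : ¬ G.Adj q (v 3) := fun h => by simpa using (hqA 3).mp h
  have hpx : ¬ G.Adj p x := fun h => hxp h.symm
  have hqx : ¬ G.Adj q x := fun h => hxq h.symm
  -- distinctness
  have hPq : p ≠ q := hpq.ne
  have hP1 : p ≠ v 1 := fun h => hpR ⟨1, h.symm⟩
  have hP3 : p ≠ v 3 := fun h => hpR ⟨3, h.symm⟩
  have hQ1 : q ≠ v 1 := fun h => hqR ⟨1, h.symm⟩
  have hQ3 : q ≠ v 3 := fun h => hqR ⟨3, h.symm⟩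
  have hPx : p ≠ x := fun h => hp1 (h ▸ hx1)
  have hQx : q ≠ x := fun h => hq1 (h ▸ hx1)
  have h1x : v 1 ≠ x := fun h => G.irrefl (h ▸ hx1)
  have h3x : v 3 ≠ x := fun h => h13 (h ▸ hx1).symm
  have h13' : v 1 ≠ v 3 := fun h => absurd (hinj h) (by decide)
  apply h1
  refine ⟨⟨![p, q, v 1, x, v 3], ?_⟩, ?_⟩
  · intro a b hab
    fin_cases a <;> fin_cases b <;> simp_all
  · intro a b
    change p2p3.Adj a b ↔ G.Adj (![p, q, v 1, x, v 3] a) (![p, q, v 1, x, v 3] b)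
    fin_cases a <;> fin_cases b <;>
      first
        | (simp_all [p2p3, SimpleGraph.fromRel_adj, G.adj_comm]; done)
        | (simp_all [p2p3, SimpleGraph.fromRel_adj, G.adj_comm] <;> decide)
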